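/- Let (b_p), (c_p), (d_p) be sequences of integers indexed by the primes. The family of ring endomorphisms of ℤ[x]/(x⁴) determined by ψ_p(x) = b_p x + c_p x² + d_p x³ is a filtered λ-ring structure if and only if all of the following hold: (i) b_p ≡ 0 (mod p) for all primes p; (ii) c₂ ≡ 1 (mod 2) and c_p ≡ 0 (mod p) for all primes p > 2; (iii) (b_q² − b_q)·c_p = (b_p² − b_p)·c_q for all primes p, q; (iv) (b_q³ − b_q)·d_p = (b_p³ − b_p)·d_q + 2c_p c_q (b_p − b_q) for all primes p, q; (v) d_p ≡ 0 (mod p) for all primes p ≠ 3, and d₃ ≡ 1 (mod 3). -/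

import Mathlib

open Polynomial

noncomputable section

/-- The truncated polynomial ring `ℤ[x]/(xⁿ)`. -/
abbrev TP (n : ℕ) : Type := Polynomial ℤ ⧸ Ideal.span {(X : Polynomial ℤ) ^ n}

/-- The class of `x` in `ℤ[x]/(xⁿ)`. -/
def xx (n : ℕ) : TP n := Ideal.Quotient.mk _ (X : Polynomial ℤ)

/-- A filtered λ-ring structure on `ℤ[x]/(xⁿ)`, presented (via Wilkerson's theorem) as a
family of Adams operations `ψ p`, indexed by the primes `p`: each `ψ p` is a ring
endomorphism preserving the filtration ideal `(x)`, they pairwise commute, and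
`ψ p r ≡ r ^ p (mod p)`. -/
structure AdamsFamily (n : ℕ) : Type where
  ψ : Nat.Primes → (TP n →+* TP n)
  maps_ideal : ∀ (p : Nat.Primes), ∀ a ∈ Ideal.span {xx n}, ψ p a ∈ Ideal.span {xx n}
  comm : ∀ p q : Nat.Primes, (ψ p).comp (ψ q) = (ψ q).comp (ψ p)
  frob : ∀ (p : Nat.Primes) (a : TP n),
    ψ p a - a ^ (p : ℕ) ∈ Ideal.span {((p : ℕ) : TP n)}

/-- Isomorphism of filtered λ-ring structures on `ℤ[x]/(xⁿ)`: a filtration-preserving ring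
automorphism intertwining the Adams operations. -/
def AdamsIso {n : ℕ} (R S : AdamsFamily n) : Prop :=
  ∃ σ : TP n ≃+* TP n,
    (Ideal.span {xx n}).map σ.toRingHom = Ideal.span {xx n} ∧
    ∀ p : Nat.Primes, σ.toRingHom.comp (R.ψ p) = (S.ψ p).comp σ.toRingHom

/-- The prime 2 as an element of `Nat.Primes`. -/
def P2 : Nat.Primes := ⟨2, Nat.prime_two⟩

/-- The prime 3 as an element of `Nat.Primes`. -/
def P3 : Nat.Primes := ⟨3, Nat.prime_three⟩

namespace Stmt13Aux

def mk4 : Polynomial ℤ →+* TP 4 := Ideal.Quotient.mk (Ideal.span {(X : Polynomial ℤ) ^ 4})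

lemma mk4_eq_zero {f : Polynomial ℤ} : mk4 f = 0 ↔ (X : Polynomial ℤ) ^ 4 ∣ f := by
  rw [mk4, Ideal.Quotient.eq_zero_iff_mem, Ideal.mem_span_singleton]

lemma dvd_of_add_mul {A K : Polynomial ℤ} (h : (X : Polynomial ℤ) ^ 4 ∣ A + X ^ 4 * K) :
    (X : Polynomial ℤ) ^ 4 ∣ A := by
  have h2 := dvd_sub h (Dvd.intro K rfl)
  simpa using h2

lemma coeff_eq_zero_of_dvd {f : Polynomial ℤ} (h : (X : Polynomial ℤ) ^ 4 ∣ f) {i : ℕ}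
    (hi : i < 4) : f.coeff i = 0 := by
  obtain ⟨k, rfl⟩ := h
  rw [mul_comm, Polynomial.coeff_mul_X_pow', if_neg (by omega)]

lemma coeff_intCast' (a : ℤ) (i : ℕ) :
    ((a : Polynomial ℤ)).coeff i = if i = 0 then a else 0 := by
  rw [← Polynomial.C_eq_intCast, coeff_C]; norm_num

def gp (b c d : ℤ) : Polynomial ℤ := C b * X + C c * X ^ 2 + C d * X ^ 3

def Ee (b1 c1 d1 b2 c2 d2 : ℤ) : Polynomial ℤ :=
  C b2 * gp b1 c1 d1 + C c2 * gp b1 c1 d1 ^ 2 + C d2 * gp b1 c1 d1 ^ 3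

lemma comp_g (b1 c1 d1 b2 c2 d2 : ℤ) :
    (gp b2 c2 d2).comp (gp b1 c1 d1) = Ee b1 c1 d1 b2 c2 d2 := by
  simp [gp, Ee, add_comp, mul_comp, C_comp, X_comp, pow_comp]

lemma key (b1 c1 d1 b2 c2 d2 : ℤ) :
    Ee b1 c1 d1 b2 c2 d2 - Ee b2 c2 d2 b1 c1 d1 =
      C ((b1 ^ 2 - b1) * c2 - (b2 ^ 2 - b2) * c1) * X ^ 2 +
      C ((b1 ^ 3 - b1) * d2 - (b2 ^ 3 - b2) * d1 + 2 * c1 * c2 * (b1 - b2)) * X ^ 3 +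
      X ^ 4 *
        (C (-3*d1*b2^2*c2 - c1*c2^2 - 2*c1*b2*d2 + c1^2*c2 + 2*b1*d1*c2 + 3*b1^2*c1*d2) +
         C (-3*d1*b2*c2^2 - 3*d1*b2^2*d2 - 2*c1*c2*d2 + 2*c1*d1*c2 + 3*b1*c1^2*d2 + 3*b1^2*d1*d2) * X +
         C (-d1*c2^3 - 6*d1*b2*c2*d2 + d1^2*c2 - c1*d2^2 + c1^3*d2 + 6*b1*c1*d1*d2) * X ^ 2 +
         C (-3*d1*c2^2*d2 - 3*d1*b2*d2^2 + 3*c1^2*d1*d2 + 3*b1*d1^2*d2) * X ^ 3 +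
         C (-3*d1*c2*d2^2 + 3*c1*d1^2*d2) * X ^ 4 +
         C (-d1*d2^3 + d1^3*d2) * X ^ 5) := by
  simp only [gp, Ee, map_mul, map_add, map_sub, map_pow, map_neg, map_ofNat, map_one]
  ring

lemma xx_eq : xx 4 = mk4 X := rfl

lemma mk4_C (t : ℤ) : mk4 (C t) = (t : TP 4) := eq_intCast (mk4.comp C) t

lemma mk_g (b1 c1 d1 : ℤ) :
    mk4 (gp b1 c1 d1) =
      (b1 : TP 4) * xx 4 + (c1 : TP 4) * xx 4 ^ 2 + (d1 : TP 4) * xx 4 ^ 3 := by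
  simp only [gp, map_add, map_mul, map_pow, mk4_C, xx_eq]

lemma aeval_mk4 (t : Polynomial ℤ) (f : Polynomial ℤ) :
    aeval (mk4 t) f = mk4 (f.comp t) := by
  rw [show mk4 t = (Ideal.Quotient.mkₐ ℤ (Ideal.span {(X : Polynomial ℤ) ^ 4})) t from rfl,
    aeval_algHom_apply, comp_eq_aeval]
  rfl

lemma comp_eq_eval_map {R : Type*} [CommRing R] (F a : R[X]) :
    F.comp a = (F.map C).eval a := by
  rw [comp, eval₂_eq_eval_map]

lemma frob_poly (p : ℕ) [hp : Fact p.Prime] (g : Polynomial ℤ)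
    (hg : (X : (ZMod p)[X]) ^ 4 ∣ g.map (Int.castRingHom (ZMod p)) - X ^ p)
    (f : Polynomial ℤ) :
    ∃ u v, f.comp g - f ^ p = C ((p : ℕ) : ℤ) * u + X ^ 4 * v := by
  have hNZ : NeZero p := ⟨hp.out.ne_zero⟩
  set π := Int.castRingHom (ZMod p) with hπ
  have h2 : (X : (ZMod p)[X]) ^ 4 ∣ (f.comp g - f ^ p).map π := by
    rw [Polynomial.map_sub, Polynomial.map_comp, Polynomial.map_pow]
    have hfrob : (f.map π) ^ p = (f.map π).comp (X ^ p) := by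
      rw [← Polynomial.map_frobenius_expand (p := p) (f.map π), ZMod.frobenius_zmod, Polynomial.map_id,
        expand_eq_comp_X_pow]
    rw [hfrob, comp_eq_eval_map, comp_eq_eval_map]
    exact dvd_trans hg (sub_dvd_eval_sub _ _ _)
  obtain ⟨k, hk⟩ := h2
  obtain ⟨k', rfl⟩ := Polynomial.map_surjective π ZMod.intCast_surjective k
  have h0 : (f.comp g - f ^ p - X ^ 4 * k').map π = 0 := by
    rw [Polynomial.map_sub, Polynomial.map_mul, Polynomial.map_pow, Polynomial.map_X, hk,
      sub_eq_zero]
  have hdvd : C ((p : ℕ) : ℤ) ∣ f.comp g - f ^ p - X ^ 4 * k' := by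
    rw [C_dvd_iff_dvd_coeff]
    intro i
    have := congrArg (fun q => Polynomial.coeff q i) h0
    simp only [Polynomial.coeff_map, Polynomial.coeff_zero] at this
    rwa [hπ, Int.coe_castRingHom, ZMod.intCast_zmod_eq_zero_iff_dvd] at this
  obtain ⟨u, hu⟩ := hdvd
  exact ⟨u, k', by linear_combination hu⟩

end Stmt13Aux

open Stmt13Aux in
theorem stmt13 (b c d : Nat.Primes → ℤ) :
    (∃ R : AdamsFamily 4, ∀ p : Nat.Primes,
        R.ψ p (xx 4) =
          (b p : TP 4) * xx 4 + (c p : TP 4) * xx 4 ^ 2 + (d p : TP 4) * xx 4 ^ 3) ↔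
    ((∀ p : Nat.Primes, ((p : ℕ) : ℤ) ∣ b p) ∧
     (Int.ModEq 2 (c P2) 1 ∧ ∀ p : Nat.Primes, 2 < (p : ℕ) → ((p : ℕ) : ℤ) ∣ c p) ∧
     (∀ p q : Nat.Primes, (b q ^ 2 - b q) * c p = (b p ^ 2 - b p) * c q) ∧
     (∀ p q : Nat.Primes,
        (b q ^ 3 - b q) * d p = (b p ^ 3 - b p) * d q + 2 * c p * c q * (b p - b q)) ∧
     ((∀ p : Nat.Primes, (p : ℕ) ≠ 3 → ((p : ℕ) : ℤ) ∣ d p) ∧ Int.ModEq 3 (d P3) 1)) := by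
  constructor
  · rintro ⟨R, hR⟩
    have hx : ∀ p : Nat.Primes, R.ψ p (xx 4) = mk4 (gp (b p) (c p) (d p)) := by
      intro p; rw [hR p, mk_g]
    -- consequences of frob at x
    have hco : ∀ p : Nat.Primes, ∃ e1 e2 e3 : ℤ,
        b p = ((p : ℕ) : ℤ) * e1 + (if (1 : ℕ) = (p : ℕ) then 1 else 0) ∧
        c p = ((p : ℕ) : ℤ) * e2 + (if (2 : ℕ) = (p : ℕ) then 1 else 0) ∧
        d p = ((p : ℕ) : ℤ) * e3 + (if (3 : ℕ) = (p : ℕ) then 1 else 0) := by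
      intro p
      have hf := R.frob p (xx 4)
      rw [hx p, xx_eq, ← map_pow, Ideal.mem_span_singleton] at hf
      obtain ⟨t, ht⟩ := hf
      obtain ⟨h, rfl⟩ := Ideal.Quotient.mk_surjective t
      have hz : mk4 (gp (b p) (c p) (d p) - X ^ (p : ℕ) - C ((p : ℕ) : ℤ) * h) = 0 := by
        rw [map_sub, map_sub, map_mul, mk4_C, ht]
        push_cast
        exact sub_eq_zero.mpr rfl
      have hdvd := mk4_eq_zero.mp hz
      refine ⟨h.coeff 1, h.coeff 2, h.coeff 3, ?_, ?_, ?_⟩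
      · have h0 := coeff_eq_zero_of_dvd hdvd (show (1:ℕ) < 4 by norm_num)
        simp [gp, coeff_sub, coeff_add, coeff_C_mul, coeff_X_pow, coeff_X, coeff_intCast',
          sub_eq_zero] at h0
        linarith [h0]
      · have h0 := coeff_eq_zero_of_dvd hdvd (show (2:ℕ) < 4 by norm_num)
        simp [gp, coeff_sub, coeff_add, coeff_C_mul, coeff_X_pow, coeff_X, coeff_intCast',
          sub_eq_zero] at h0
        linarith [h0]
      · have h0 := coeff_eq_zero_of_dvd hdvd (show (3:ℕ) < 4 by norm_num)
        simp [gp, coeff_sub, coeff_add, coeff_C_mul, coeff_X_pow, coeff_X, coeff_intCast',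
          sub_eq_zero] at h0
        linarith [h0]
    -- consequences of comm at x
    have hcm : ∀ p q : Nat.Primes,
        ((b p ^ 2 - b p) * c q - (b q ^ 2 - b q) * c p = 0) ∧
        ((b p ^ 3 - b p) * d q - (b q ^ 3 - b q) * d p + 2 * c p * c q * (b p - b q) = 0) := by
      intro p q
      have appg : ∀ p' q' : Nat.Primes, R.ψ p' (mk4 (gp (b q') (c q') (d q'))) =
          mk4 (Ee (b p') (c p') (d p') (b q') (c q') (d q')) := by
        intro p' q'
        rw [mk_g]
        simp only [map_add, map_mul, map_pow, map_intCast, hx p', Ee]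
        simp only [map_add, map_mul, map_pow, mk4_C]
      have hcpq := RingHom.congr_fun (R.comm p q) (xx 4)
      simp only [RingHom.comp_apply] at hcpq
      rw [hx q, hx p, appg p q, appg q p] at hcpq
      have hz : mk4 (Ee (b p) (c p) (d p) (b q) (c q) (d q)
          - Ee (b q) (c q) (d q) (b p) (c p) (d p)) = 0 := by
        rw [map_sub, sub_eq_zero, hcpq]
      have hdvd := mk4_eq_zero.mp hz
      rw [key] at hdvd
      have hdvd2 : (X : Polynomial ℤ) ^ 4 ∣
          C ((b p ^ 2 - b p) * c q - (b q ^ 2 - b q) * c p) * X ^ 2 +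
          C ((b p ^ 3 - b p) * d q - (b q ^ 3 - b q) * d p + 2 * c p * c q * (b p - b q)) * X ^ 3 := by
        exact dvd_of_add_mul hdvd
      constructor
      · have h0 := coeff_eq_zero_of_dvd hdvd2 (show (2:ℕ) < 4 by norm_num)
        simp only [coeff_add, coeff_C_mul, coeff_X_pow] at h0
        norm_num at h0
        exact h0
      · have h0 := coeff_eq_zero_of_dvd hdvd2 (show (3:ℕ) < 4 by norm_num)
        simp only [coeff_add, coeff_C_mul, coeff_X_pow] at h0
        norm_num at h0
        exact h0
    refine ⟨?_, ⟨?_, ?_⟩, ?_, ?_, ?_, ?_⟩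
    · intro p
      obtain ⟨e1, e2, e3, hb, -, -⟩ := hco p
      rw [if_neg (by have := p.2.two_le; omega)] at hb
      exact ⟨e1, by linarith⟩
    · obtain ⟨e1, e2, e3, -, hc, -⟩ := hco P2
      rw [show ((P2 : ℕ)) = 2 from rfl] at hc
      norm_num at hc
      exact Int.ModEq.symm (Int.modEq_iff_dvd.mpr ⟨e2, by linarith⟩)
    · intro p hp
      obtain ⟨e1, e2, e3, -, hc, -⟩ := hco p
      rw [if_neg (by omega)] at hc
      exact ⟨e2, by linarith⟩
    · intro p q
      have h0 := (hcm q p).1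
      linarith
    · intro p q
      have h0 := (hcm q p).2
      linarith
    · intro p hp
      obtain ⟨e1, e2, e3, -, -, hd⟩ := hco p
      rw [if_neg (by omega)] at hd
      exact ⟨e3, by linarith⟩
    · obtain ⟨e1, e2, e3, -, -, hd⟩ := hco P3
      rw [show ((P3 : ℕ)) = 3 from rfl] at hd
      norm_num at hd
      exact Int.ModEq.symm (Int.modEq_iff_dvd.mpr ⟨e3, by linarith⟩)
  · rintro ⟨h1, ⟨h2a, h2b⟩, h3, h4, h5a, h5b⟩
    set G : Nat.Primes → Polynomial ℤ := fun p => gp (b p) (c p) (d p) with hG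
    have hXdvd : ∀ p : Nat.Primes, (X : Polynomial ℤ) ∣ G p :=
      fun p => ⟨C (b p) + C (c p) * X + C (d p) * X ^ 2, by rw [hG]; simp only [gp]; ring⟩
    have hgmod : ∀ p : Nat.Primes,
        (X : (ZMod (p : ℕ))[X]) ^ 4 ∣
          (G p).map (Int.castRingHom (ZMod (p : ℕ))) - X ^ (p : ℕ) := by
      intro p
      have hmap : (G p).map (Int.castRingHom (ZMod (p : ℕ))) =
          C ((b p : ZMod (p : ℕ))) * X + C ((c p : ZMod (p : ℕ))) * X ^ 2 +
          C ((d p : ZMod (p : ℕ))) * X ^ 3 := by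
        simp [hG, gp, Polynomial.map_add, Polynomial.map_mul, Polynomial.map_pow,
          Polynomial.map_C, Polynomial.map_X, Int.coe_castRingHom]
      by_cases hp2 : (p : ℕ) = 2
      · have hP : p = P2 := Subtype.ext hp2
        subst hP
        have hb : ((b P2 : ZMod (P2 : ℕ))) = 0 :=
          (ZMod.intCast_zmod_eq_zero_iff_dvd _ _).mpr (by exact_mod_cast h1 P2)
        have hc : ((c P2 : ZMod (P2 : ℕ))) = 1 := by
          have : ((c P2 : ZMod 2)) = ((1 : ℤ) : ZMod 2) :=
            (ZMod.intCast_eq_intCast_iff _ _ _).mpr (by exact_mod_cast h2a)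
          simp only [Int.cast_one] at this; exact this
        have hd : ((d P2 : ZMod (P2 : ℕ))) = 0 :=
          (ZMod.intCast_zmod_eq_zero_iff_dvd _ _).mpr (by exact_mod_cast h5a P2 (by norm_num [P2]))
        rw [hmap, hb, hc, hd]
        norm_num [show ((P2 : ℕ)) = 2 from rfl]
      · by_cases hp3 : (p : ℕ) = 3
        · have hP : p = P3 := Subtype.ext hp3
          subst hP
          have hb : ((b P3 : ZMod (P3 : ℕ))) = 0 :=
            (ZMod.intCast_zmod_eq_zero_iff_dvd _ _).mpr (by exact_mod_cast h1 P3)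
          have hc : ((c P3 : ZMod (P3 : ℕ))) = 0 :=
            (ZMod.intCast_zmod_eq_zero_iff_dvd _ _).mpr
              (by exact_mod_cast h2b P3 (by norm_num [P3]))
          have hd : ((d P3 : ZMod (P3 : ℕ))) = 1 := by
            have : ((d P3 : ZMod 3)) = ((1 : ℤ) : ZMod 3) :=
              (ZMod.intCast_eq_intCast_iff _ _ _).mpr (by exact_mod_cast h5b)
            simp only [Int.cast_one] at this; exact this
          rw [hmap, hb, hc, hd]
          norm_num [show ((P3 : ℕ)) = 3 from rfl]
        · have hge : 5 ≤ (p : ℕ) := by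
            have h2le := p.2.two_le
            have hne4 : (p : ℕ) ≠ 4 := by
              intro h4
              have := p.2
              rw [h4] at this
              norm_num at this
            omega
          have hb : ((b p : ZMod (p : ℕ))) = 0 :=
            (ZMod.intCast_zmod_eq_zero_iff_dvd _ _).mpr (h1 p)
          have hc : ((c p : ZMod (p : ℕ))) = 0 :=
            (ZMod.intCast_zmod_eq_zero_iff_dvd _ _).mpr (h2b p (by omega))
          have hd : ((d p : ZMod (p : ℕ))) = 0 :=
            (ZMod.intCast_zmod_eq_zero_iff_dvd _ _).mpr (h5a p hp3)
          rw [hmap, hb, hc, hd]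
          simp only [map_zero, zero_mul, add_zero, zero_sub]
          exact (dvd_neg).mpr (pow_dvd_pow X (by omega))
    -- the lifted endomorphisms
    have hker : ∀ p : Nat.Primes, ∀ a ∈ Ideal.span {(X : Polynomial ℤ) ^ 4},
        ((aeval (mk4 (G p))).toRingHom : Polynomial ℤ →+* TP 4) a = 0 := by
      intro p a ha
      rw [Ideal.mem_span_singleton] at ha
      obtain ⟨k, rfl⟩ := ha
      have hG4 : (mk4 (G p)) ^ 4 = 0 := by
        rw [← map_pow, mk4_eq_zero]
        exact pow_dvd_pow_of_dvd (hXdvd p) 4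
      simp only [AlgHom.toRingHom_eq_coe, RingHom.coe_coe, map_mul, map_pow, aeval_X, hG4,
        zero_mul]
    set Ψ : Nat.Primes → (TP 4 →+* TP 4) := fun p =>
      Ideal.Quotient.lift (Ideal.span {(X : Polynomial ℤ) ^ 4})
        ((aeval (mk4 (G p))).toRingHom) (hker p) with hΨdef
    have hΨmk : ∀ (p : Nat.Primes) (f : Polynomial ℤ), Ψ p (mk4 f) = mk4 (f.comp (G p)) := by
      intro p f
      rw [hΨdef]
      show (aeval (mk4 (G p))).toRingHom f = _
      simp only [AlgHom.toRingHom_eq_coe, RingHom.coe_coe]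
      rw [aeval_mk4]
    have hΨx : ∀ p : Nat.Primes, Ψ p (xx 4) = mk4 (G p) := by
      intro p
      rw [xx_eq, hΨmk, X_comp]
    refine ⟨⟨Ψ, ?_, ?_, ?_⟩, ?_⟩
    · -- maps_ideal
      intro p a ha
      rw [Ideal.mem_span_singleton] at ha ⊢
      obtain ⟨t, rfl⟩ := ha
      rw [map_mul, hΨx]
      obtain ⟨u, hu⟩ := hXdvd p
      refine dvd_mul_of_dvd_left ⟨mk4 u, ?_⟩ _
      rw [hu, map_mul, xx_eq]
    · -- comm
      intro p q
      apply Ideal.Quotient.ringHom_ext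
      apply Polynomial.ringHom_ext
      · intro a
        simp only [RingHom.comp_apply]
        show Ψ p (Ψ q (mk4 (C a))) = Ψ q (Ψ p (mk4 (C a)))
        simp only [mk4_C, map_intCast]
      · simp only [RingHom.comp_apply]
        show Ψ p (Ψ q (mk4 X)) = Ψ q (Ψ p (mk4 X))
        rw [hΨmk, X_comp, hΨmk, hΨmk, X_comp, hΨmk]
        rw [← sub_eq_zero, ← map_sub, mk4_eq_zero, comp_g, comp_g, key]
        have e1 : (b p ^ 2 - b p) * c q - (b q ^ 2 - b q) * c p = 0 := by
          have := h3 q p; linarith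
        have e2 : (b p ^ 3 - b p) * d q - (b q ^ 3 - b q) * d p
            + 2 * c p * c q * (b p - b q) = 0 := by
          have := h4 q p; linarith
        rw [e1, e2]
        simp only [map_zero, zero_mul, zero_add]
        exact Dvd.intro _ rfl
    · -- frob
      intro p a
      obtain ⟨f, rfl⟩ := Ideal.Quotient.mk_surjective a
      haveI : Fact (p : ℕ).Prime := ⟨p.2⟩
      obtain ⟨u, v, huv⟩ := frob_poly (p : ℕ) (G p) (hgmod p) f
      rw [Ideal.mem_span_singleton]
      show ((p : ℕ) : TP 4) ∣ Ψ p (mk4 f) - (mk4 f) ^ (p : ℕ)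
      rw [hΨmk, ← map_pow, ← map_sub, huv, map_add, map_mul, map_mul, mk4_C]
      have hz : mk4 (X ^ 4) = 0 := mk4_eq_zero.mpr dvd_rfl
      rw [map_pow] at hz ⊢
      rw [hz, zero_mul, add_zero]
      exact ⟨mk4 u, by push_cast; rfl⟩
    · -- value at x
      intro p
      rw [show (⟨Ψ, _, _, _⟩ : AdamsFamily 4).ψ p (xx 4) = Ψ p (xx 4) from rfl, hΨx, hG]
      exact mk_g _ _ _
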